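/- If the cycle graph C_n (n ≥ 3) admits a geodesic Leech labeling, then n = 3, n = 4, or n = 10. -/

import Mathlib

open SimpleGraph Finset

/-- A walk in `G` is a *geodesic walk* if it is a nontrivial path whose length equals
the distance in `G` between its endpoints. -/
def SimpleGraph.IsGeodesicWalk {V : Type*} (G : SimpleGraph V) {u v : V}
    (p : G.Walk u v) : Prop :=
  p.IsPath ∧ p.length = G.dist u v ∧ 0 < p.length

/-- The geodesic paths of `G`, where a path and its reverse are identified by
recording the (finite) set of edges of the path.  (A nontrivial path is determined,
up to reversal, by its edge set.) -/
def SimpleGraph.geodesicPathSets {V : Type*} [DecidableEq V] (G : SimpleGraph V) :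
    Set (Finset (Sym2 V)) :=
  {S | ∃ (u v : V) (p : G.Walk u v), G.IsGeodesicWalk p ∧ p.edges.toFinset = S}

/-- The geodesic path number `t_gp(G)`: the number of geodesic paths of `G`. -/
noncomputable def SimpleGraph.tgp {V : Type*} [DecidableEq V] (G : SimpleGraph V) : ℕ :=
  G.geodesicPathSets.ncard

/-- `f` is a geodesic Leech labeling of `G`: an edge labeling by positive integers such
that the weights of the geodesic paths of `G` are exactly `1, 2, …, t_gp(G)`,
each occurring exactly once. -/
def SimpleGraph.IsGeodesicLeechLabeling {V : Type*} [DecidableEq V] (G : SimpleGraph V)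
    (f : Sym2 V → ℕ) : Prop :=
  (∀ e ∈ G.edgeSet, 1 ≤ f e) ∧
    Set.BijOn (fun S => ∑ e ∈ S, f e) G.geodesicPathSets (Set.Icc 1 G.tgp)

section Aux

open scoped Fin.NatCast Fin.IntCast Fin.CommRing

variable {k : ℕ}

local notation "N" => k + 3

abbrev cg (k : ℕ) : SimpleGraph (Fin (k+3)) := SimpleGraph.cycleGraph (k+3)

lemma adj_iff {u v : Fin N} : (cg k).Adj u v ↔ (u - v = 1 ∨ v - u = 1) := cycleGraph_adj

lemma twoNeZero : (2 : Fin N) ≠ 0 := by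
  have : ((2:ℕ) : Fin N) ≠ ((0:ℕ) : Fin N) := by
    intro h
    have := congrArg Fin.val h
    simp [Fin.val_natCast] at this
    rw [Nat.mod_eq_of_lt (by omega)] at this
    omega
  simpa using this

lemma cast_inj_of_lt {i j : ℕ} (hi : i < N) (hj : j < N) (h : (i : Fin N) = j) : i = j := by
  have := congrArg Fin.val h
  simpa [Fin.val_natCast, Nat.mod_eq_of_lt hi, Nat.mod_eq_of_lt hj] using this

lemma edge_eq {x y : Fin N} (h : s(x, x+1) = s(y, y+1)) : x = y := by
  rw [Sym2.eq_iff] at h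
  rcases h with ⟨h1, _⟩ | ⟨h1, h2⟩
  · exact h1
  · exfalso
    apply twoNeZero (k := k)
    have : x + 2 = x + 0 := by
      rw [add_zero]
      calc x + 2 = x + 1 + 1 := by ring
      _ = y + 1 := by rw [h2]
      _ = x := h1.symm
    exact add_left_cancel this

lemma arcWalk (ℓ : ℕ) : ∀ (a : Fin N), ∃ p : (cg k).Walk a (a + (ℓ:Fin N)),
    p.length = ℓ ∧ p.edges = (List.range ℓ).map (fun i : ℕ => s(a + (i:Fin N), a + (i:Fin N) + 1)) ∧
    p.support = (List.range (ℓ+1)).map (fun i : ℕ => a + (i:Fin N)) := by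
  induction ℓ with
  | zero =>
    intro a
    refine ⟨(Walk.nil' a).copy rfl (by simp), ?_, ?_, ?_⟩ <;>
      simp [List.range_succ]
  | succ m ih =>
    intro a
    obtain ⟨q, hq1, hq2, hq3⟩ := ih (a + 1)
    have hadj : (cg k).Adj a (a + 1) := by
      rw [adj_iff]; right; simp
    have hend : a + 1 + (m : Fin N) = a + ((m+1 : ℕ) : Fin N) := by
      push_cast; ring
    refine ⟨(Walk.cons hadj q).copy rfl hend, ?_, ?_, ?_⟩
    · simp [hq1]
    · rw [Walk.edges_copy, Walk.edges_cons, hq2, List.range_succ_eq_map, List.map_cons,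
        List.map_map]
      congr 1
      · norm_num
      · apply List.map_congr_left
        intro i _
        simp only [Function.comp_apply, Nat.succ_eq_add_one]
        have h1 : a + 1 + (i : Fin N) = a + ((i+1 : ℕ) : Fin N) := by push_cast; ring
        rw [h1]
    · rw [Walk.support_copy, Walk.support_cons, @List.range_succ_eq_map (m+1), List.map_cons,
        List.map_map, hq3]
      congr 1
      · norm_num
      · apply List.map_congr_left
        intro i _
        simp only [Function.comp_apply, Nat.succ_eq_add_one]
        push_cast; ring

lemma walk_parity {u v : Fin N} (p : (cg k).Walk u v) :
    ∃ s t : ℕ, s + t = p.length ∧ u + (s : Fin N) = v + (t : Fin N) := by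
  induction p with
  | nil => exact ⟨0, 0, rfl, rfl⟩
  | @cons x w y h q ih =>
    obtain ⟨s, t, hst, he⟩ := ih
    rw [adj_iff] at h
    rcases h with h | h
    · -- x - w = 1, i.e. x = w + 1
      refine ⟨s, t + 1, by rw [Walk.length_cons]; omega, ?_⟩
      have hw : w + 1 = x := by
        have := congrArg (fun z => z + w) h
        simpa [sub_add_cancel, add_comm] using this.symm
      push_cast
      calc x + (s:Fin N) = w + 1 + (s:Fin N) := by rw [hw]
      _ = w + (s:Fin N) + 1 := by ring
      _ = y + (t:Fin N) + 1 := by rw [he]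
      _ = y + ((t:Fin N) + 1) := by ring
    · -- w - x = 1, w = x + 1
      refine ⟨s + 1, t, by rw [Walk.length_cons]; omega, ?_⟩
      have hw : x + 1 = w := by
        have := congrArg (fun z => z + x) h
        simpa [sub_add_cancel, add_comm] using this.symm
      push_cast
      calc x + ((s:Fin N) + 1) = x + 1 + (s:Fin N) := by ring
      _ = w + (s:Fin N) := by rw [hw]
      _ = y + (t:Fin N) := he

lemma dist_lower {u v : Fin N} :
    min (v - u).val (N - (v - u).val) ≤ (cg k).dist u v := by
  have hreach : (cg k).Reachable u v := (cycleGraph_connected).preconnected u v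
  obtain ⟨p, hp⟩ := hreach.exists_walk_length_eq_dist
  rw [← hp]
  obtain ⟨s, t, hst, he⟩ := walk_parity p
  set d := (v - u).val with hd
  have hdlt : d < N := (v - u).isLt
  have hcast : ((d + t : ℕ) : Fin N) = ((s : ℕ) : Fin N) := by
    push_cast
    have : (d : Fin N) = v - u := by simp [hd, Fin.cast_val_eq_self]
    rw [this]
    have := congrArg (fun z => z - u) he
    calc v - u + (t:Fin N) = v + (t:Fin N) - u := by ring
    _ = u + (s:Fin N) - u := by rw [he]
    _ = (s : Fin N) := by ring
  have hmod : (d + t) % N = s % N := by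
    have := congrArg Fin.val hcast
    rw [Fin.val_natCast, Fin.val_natCast] at this
    exact this
  -- now conclude
  rcases Nat.lt_or_ge s (d + t) with hlt | hle
  · have hmeq : s ≡ d + t [MOD (k+3 : ℕ)] := hmod.symm
    have hdvd : (k+3 : ℕ) ∣ (d + t) - s := (Nat.modEq_iff_dvd' hlt.le).mp hmeq
    have hge : (k+3 : ℕ) ≤ d + t - s := Nat.le_of_dvd (by omega) hdvd
    omega
  · omega

lemma dist_arc {a : Fin N} {ℓ : ℕ} (h2 : 2 * ℓ ≤ N) :
    (cg k).dist a (a + (ℓ : Fin N)) = ℓ := by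
  obtain ⟨p, hp1, _, _⟩ := arcWalk ℓ a
  have hub : (cg k).dist a (a + (ℓ : Fin N)) ≤ ℓ := by
    have := SimpleGraph.dist_le p
    omega
  have hd : (a + (ℓ : Fin N) - a).val = ℓ := by
    have : a + (ℓ : Fin N) - a = (ℓ : Fin N) := by ring
    rw [this, Fin.val_natCast, Nat.mod_eq_of_lt (by omega)]
  have hlb := dist_lower (k := k) (u := a) (v := a + (ℓ : Fin N))
  rw [hd] at hlb
  omega

-- every distance is at most N/2
lemma dist_le_half (u v : Fin N) : (cg k).dist u v ≤ N / 2 := by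
  set d := (v - u).val with hd
  have hdlt : d < N := (v - u).isLt
  rcases Nat.lt_or_ge d ((N+1)/2) with hlt | hge
  · -- dist u v ≤ d ≤ N/2? careful: d ≤ (N+1)/2 - 1 ≤ N/2
    have hv : v = u + (d : Fin N) := by
      rw [hd, Fin.cast_val_eq_self]; ring
    rw [hv]
    obtain ⟨p, hp1, _, _⟩ := arcWalk d u
    have := hp1 ▸ SimpleGraph.dist_le p
    omega
  · -- use the other direction: dist u v = dist v u ≤ N - d
    have hne : v - u ≠ 0 := by
      intro h0
      rw [h0] at hd
      simp [hd] at hge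
    have hval : (u - v).val = N - d := by
      have : u - v = -(v - u) := by ring
      rw [this, Fin.neg_def]
      have hv0 : (v - u).val ≠ 0 := by
        intro h0
        exact hne (Fin.ext (by simpa using h0))
      simp only []
      rw [Nat.mod_eq_of_lt (by omega)]
    have hu : u = v + ((N - d : ℕ) : Fin N) := by
      rw [← hval, Fin.cast_val_eq_self]; ring
    obtain ⟨p, hp1, _, _⟩ := arcWalk (N - d) v
    rw [SimpleGraph.dist_comm, hu]
    have := hp1 ▸ SimpleGraph.dist_le p
    omega

def arc (a : Fin N) (ℓ : ℕ) : Finset (Sym2 (Fin N)) :=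
  (Finset.range ℓ).image (fun i : ℕ => s(a + (i : Fin N), a + (i : Fin N) + 1))

lemma mem_arc {e : Sym2 (Fin N)} {a : Fin N} {ℓ : ℕ} :
    e ∈ arc a ℓ ↔ ∃ i < ℓ, e = s(a + (i : Fin N), a + (i : Fin N) + 1) := by
  simp [arc, eq_comm]

lemma arc_succ_top (a : Fin N) (ℓ : ℕ) :
    arc a (ℓ+1) = insert s(a + (ℓ : Fin N), a + (ℓ : Fin N) + 1) (arc a ℓ) := by
  rw [arc, Finset.range_add_one, Finset.image_insert]
  rfl

lemma arc_succ_bot (a : Fin N) (ℓ : ℕ) :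
    arc a (ℓ+1) = insert s(a, a + 1) (arc (a+1) ℓ) := by
  ext e
  simp only [mem_arc, Finset.mem_insert]
  constructor
  · rintro ⟨i, hi, rfl⟩
    match i with
    | 0 => left; norm_num
    | j+1 =>
      right
      refine ⟨j, by omega, ?_⟩
      congr 1 <;> · push_cast; ring
  · rintro (rfl | ⟨j, hj, rfl⟩)
    · exact ⟨0, by omega, by norm_num⟩
    · refine ⟨j+1, by omega, ?_⟩
      congr 1 <;> · push_cast; ring

lemma path_classify {u v : Fin N} (p : (cg k).Walk u v) (hp : p.IsPath) :
    (p.edges.toFinset = arc u p.length ∧ v = u + (p.length : Fin N)) ∨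
    (p.edges.toFinset = arc v p.length ∧ u = v + (p.length : Fin N)) := by
  induction p with
  | nil =>
    left
    constructor
    · simp [arc]
    · norm_num
  | @cons x w y h q ih =>
    rw [Walk.cons_isPath_iff] at hp
    obtain ⟨hq, hx⟩ := hp
    have hadj := h
    rw [adj_iff] at hadj
    rcases ih hq with ⟨he, hv⟩ | ⟨he, hv⟩
    · -- q goes up from w
      rcases hadj with h1 | h1
      · -- x = w + 1, q starts at w = x - 1; contradiction unless length 0
        have hw1 : w + 1 = x := by
          have := congrArg (fun z => z + w) h1
          simpa [sub_add_cancel, add_comm] using this.symm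
        match hql : q.length, q with
        | _, Walk.nil =>
          -- w = y, length 1 path going down: right case
          right
          simp only [Walk.edges_cons, Walk.edges_nil, Walk.length_cons, Walk.length_nil]
          constructor
          · rw [List.toFinset_cons, List.toFinset_nil]
            have : s(x, w) = s(w, w + 1) := by rw [hw1]; exact Sym2.eq_swap
            rw [this]
            show _ = arc w (0 + 1)
            rw [arc_succ_bot]
            simp [arc]
          · rw [← hw1]; norm_num
        | _, Walk.cons h' q' =>
          -- q has length ≥ 1 and contains edge s(w, w+1) = s(w, x): x ∈ q.support, contra
          exfalso
          apply hx
          have hmem : s(w, w + 1) ∈ (Walk.cons h' q').edges.toFinset := by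
            rw [he, Walk.length_cons, mem_arc]
            exact ⟨0, by omega, by norm_num⟩
          rw [List.mem_toFinset] at hmem
          rw [hw1] at hmem
          exact Walk.snd_mem_support_of_mem_edges _ hmem
      · -- w = x + 1: p goes up from x
        have hw1 : x + 1 = w := by
          have := congrArg (fun z => z + x) h1
          simpa [sub_add_cancel, add_comm] using this.symm
        left
        constructor
        · rw [Walk.edges_cons, List.toFinset_cons, Walk.length_cons, arc_succ_bot, he, hw1]
        · rw [Walk.length_cons]; push_cast; linear_combination hv - hw1
    · -- q goes down to y : q.edges = arc y ℓ', w = y + ℓ'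
      rcases hadj with h1 | h1
      · -- x = w + 1: p continues down: right case
        have hxw : x = w + 1 := by
          have := congrArg (fun z => z + w) h1
          simpa [sub_add_cancel, add_comm] using this
        right
        constructor
        · rw [Walk.edges_cons, List.toFinset_cons, Walk.length_cons, arc_succ_top, he]
          congr 1
          rw [← hv, hxw]
          exact Sym2.eq_swap
        · rw [Walk.length_cons]
          push_cast
          linear_combination hv + hxw
      · -- w = x + 1: contradiction unless q length 0
        have hw1 : x + 1 = w := by
          have := congrArg (fun z => z + x) h1
          simpa [sub_add_cancel, add_comm] using this.symm
        match hql : q.length, q with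
        | _, Walk.nil =>
          left
          simp only [Walk.edges_cons, Walk.edges_nil, Walk.length_cons, Walk.length_nil]
          constructor
          · rw [List.toFinset_cons, List.toFinset_nil]
            show _ = arc x (0 + 1)
            rw [arc_succ_bot, hw1]
            simp [arc]
          · rw [← hw1]; norm_num
        | _, Walk.cons h' q' =>
          exfalso
          apply hx
          -- top edge of arc y ℓ' (ℓ' = len ≥ 1) is s(y + (ℓ'-1), y + ℓ') = s(w - 1, w) = s(x, w)
          have hlen : 1 ≤ (Walk.cons h' q').length := by
            rw [Walk.length_cons]; omega
          have hmem : s(y + ((Walk.cons h' q').length - 1 : ℕ),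
              y + ((Walk.cons h' q').length - 1 : ℕ) + 1) ∈ (Walk.cons h' q').edges.toFinset := by
            rw [he, mem_arc]
            exact ⟨(Walk.cons h' q').length - 1, by omega, rfl⟩
          rw [List.mem_toFinset] at hmem
          have hL : ((Walk.cons h' q').length : ℕ) = ((Walk.cons h' q').length - 1) + 1 := by
            omega
          have hxeq : y + (((Walk.cons h' q').length - 1 : ℕ) : Fin N) = x := by
            have h2 : w = y + ((((Walk.cons h' q').length - 1) + 1 : ℕ) : Fin N) := by
              rw [← hL]; exact hv
            push_cast at h2
            linear_combination -h2 - hw1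
          rw [hxeq] at hmem
          exact Walk.fst_mem_support_of_mem_edges _ hmem

lemma edge_map_injOn {a : Fin N} {ℓ : ℕ} (hℓ : ℓ ≤ N) :
    Set.InjOn (fun i : ℕ => s(a + (i : Fin N), a + (i : Fin N) + 1)) (Finset.range ℓ) := by
  intro i hi j hj hij
  simp only [Finset.coe_range, Set.mem_Iio] at hi hj
  have := edge_eq hij
  have := add_left_cancel this
  exact cast_inj_of_lt (by omega) (by omega) this

lemma arc_card {a : Fin N} {ℓ : ℕ} (hℓ : ℓ ≤ N) : (arc a ℓ).card = ℓ := by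
  rw [arc, Finset.card_image_of_injOn (edge_map_injOn hℓ), Finset.card_range]

lemma arc_injOn :
    Set.InjOn (fun q : Fin N × ℕ => arc q.1 q.2)
      ((Finset.univ ×ˢ Finset.Icc 1 (N / 2)) : Finset (Fin N × ℕ)) := by
  rintro ⟨a, ℓ⟩ ha ⟨b, j⟩ hb hab
  simp only [Finset.coe_product, Set.mem_prod, Finset.coe_Icc, Set.mem_Icc] at ha hb
  obtain ⟨-, h1ℓ, hℓ⟩ := ha
  obtain ⟨-, h1j, hj⟩ := hb
  simp only at hab
  have hcard : ℓ = j := by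
    have h1 := arc_card (a := a) (ℓ := ℓ) (by omega)
    have h2 := arc_card (a := b) (ℓ := j) (by omega)
    rw [hab] at h1
    omega
  subst hcard
  have hb_mem : s(b, b + 1) ∈ arc a ℓ := by
    rw [hab, mem_arc]
    exact ⟨0, by omega, by norm_num⟩
  have ha_mem : s(a, a + 1) ∈ arc b ℓ := by
    rw [← hab, mem_arc]
    exact ⟨0, by omega, by norm_num⟩
  rw [mem_arc] at hb_mem ha_mem
  obtain ⟨i, hi, hbi⟩ := hb_mem
  obtain ⟨i', hi', hai⟩ := ha_mem
  have hb_eq : b = a + (i : Fin N) := edge_eq hbi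
  have ha_eq : a = b + (i' : Fin N) := edge_eq hai
  have : a = a + ((i + i' : ℕ) : Fin N) := by
    push_cast
    linear_combination ha_eq + hb_eq
  have h0 : ((i + i' : ℕ) : Fin N) = ((0 : ℕ) : Fin N) := by
    have := congrArg (fun z => z - a) this
    simpa using this.symm
  have hii : i + i' = 0 := cast_inj_of_lt (by omega) (by omega) h0
  have : i = 0 := by omega
  subst this
  simp only [Prod.mk.injEq]
  refine ⟨?_, trivial⟩
  rw [hb_eq]; norm_num

def arcFam (k : ℕ) : Finset (Finset (Sym2 (Fin (k+3)))) :=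
  (Finset.univ ×ˢ Finset.Icc 1 ((k+3) / 2)).image (fun q : Fin (k+3) × ℕ => arc q.1 q.2)

lemma geo_eq : (cg k).geodesicPathSets = ↑(arcFam k) := by
  ext S
  constructor
  · rintro ⟨u, v, p, ⟨hp, hlen, hpos⟩, rfl⟩
    have hle : p.length ≤ N / 2 := hlen ▸ dist_le_half u v
    rcases path_classify p hp with ⟨he, -⟩ | ⟨he, -⟩
    · exact Finset.mem_coe.mpr (Finset.mem_image.mpr ⟨(u, p.length),
        Finset.mem_product.mpr ⟨Finset.mem_univ _, Finset.mem_Icc.mpr ⟨by omega, hle⟩⟩, he.symm⟩)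
    · exact Finset.mem_coe.mpr (Finset.mem_image.mpr ⟨(v, p.length),
        Finset.mem_product.mpr ⟨Finset.mem_univ _, Finset.mem_Icc.mpr ⟨by omega, hle⟩⟩, he.symm⟩)
  · intro hS
    rw [Finset.mem_coe, arcFam, Finset.mem_image] at hS
    obtain ⟨⟨a, ℓ⟩, hmem, hS⟩ := hS
    rw [Finset.mem_product, Finset.mem_Icc] at hmem
    obtain ⟨-, h1, h2⟩ := hmem
    obtain ⟨p, hp1, hp2, hp3⟩ := arcWalk ℓ a
    refine ⟨a, a + (ℓ : Fin N), p, ⟨?_, ?_, ?_⟩, ?_⟩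
    · rw [Walk.isPath_def, hp3]
      apply List.Nodup.map_on _ List.nodup_range
      intro i hi j hj hij
      rw [List.mem_range] at hi hj
      exact cast_inj_of_lt (by omega) (by omega) (add_left_cancel hij)
    · rw [hp1, dist_arc (by omega)]
    · omega
    · rw [← hS, hp2]
      ext e
      rw [List.mem_toFinset, List.mem_map, mem_arc]
      simp only [List.mem_range]
      constructor
      · rintro ⟨i, hi, rfl⟩; exact ⟨i, hi, rfl⟩
      · rintro ⟨i, hi, rfl⟩; exact ⟨i, hi, rfl⟩

lemma tgp_eq : (cg k).tgp = (k + 3) * ((k + 3) / 2) := by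
  rw [SimpleGraph.tgp, geo_eq, Set.ncard_coe_finset, arcFam,
    Finset.card_image_of_injOn arc_injOn, Finset.card_product, Finset.card_univ,
    Fintype.card_fin, Nat.card_Icc]
  simp

lemma sum_weights (f : Sym2 (Fin N) → ℕ) :
    ∑ S ∈ arcFam k, ∑ e ∈ S, f e
      = (∑ ℓ ∈ Finset.Icc 1 (N / 2), ℓ) * (∑ a : Fin N, f s(a, a + 1)) := by
  rw [arcFam, Finset.sum_image (fun x hx y hy hxy => arc_injOn hx hy hxy)]
  rw [Finset.sum_product_right]
  have harc : ∀ (ℓ : ℕ), ℓ ∈ Finset.Icc 1 (N / 2) → ∀ a : Fin N,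
      ∑ e ∈ arc a ℓ, f e = ∑ i ∈ Finset.range ℓ, f s(a + (i : Fin N), a + (i : Fin N) + 1) := by
    intro ℓ hℓ a
    rw [Finset.mem_Icc] at hℓ
    rw [arc, Finset.sum_image (fun x hx y hy hxy => edge_map_injOn (by omega) hx hy hxy)]
  rw [Finset.sum_congr rfl (fun ℓ hℓ => Finset.sum_congr rfl (fun a _ => harc ℓ hℓ a))]
  rw [Finset.sum_mul]
  apply Finset.sum_congr rfl
  intro ℓ hℓ
  rw [Finset.sum_comm]
  have hinner : ∀ i : ℕ, ∑ a : Fin N, f s(a + (i : Fin N), a + (i : Fin N) + 1)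
      = ∑ a : Fin N, f s(a, a + 1) := by
    intro i
    apply Fintype.sum_equiv (Equiv.addRight (i : Fin N))
    intro a
    simp [Equiv.coe_addRight]
  rw [Finset.sum_congr rfl (fun i _ => hinner i), Finset.sum_const, Finset.card_range,
    smul_eq_mul]

lemma gauss (t : ℕ) : 2 * ∑ j ∈ Finset.Icc 1 t, j = t * (t + 1) := by
  induction t with
  | zero => simp
  | succ s ih =>
    rw [Finset.sum_Icc_succ_top (by omega), Nat.mul_add, ih]
    ring

lemma odd_case (m S0 : ℕ) (hm : 1 ≤ m)
    (h : m * (m + 1) * S0 = ((2 * m + 1) * m) * ((2 * m + 1) * m + 1)) : m = 1 := by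
  have h2 : (m + 1) * S0 = (2 * m + 1) * ((2 * m + 1) * m + 1) := by
    apply Nat.eq_of_mul_eq_mul_left (show 0 < m by omega)
    calc m * ((m + 1) * S0) = m * (m + 1) * S0 := by ring
    _ = ((2 * m + 1) * m) * ((2 * m + 1) * m + 1) := h
    _ = m * ((2 * m + 1) * ((2 * m + 1) * m + 1)) := by ring
  have hd1 : (m + 1) ∣ (2 * m + 1) * ((2 * m + 1) * m + 1) := ⟨S0, h2.symm⟩
  have heq2 : (m + 1) * (4 * m * m + 3) = (2 * m + 1) * ((2 * m + 1) * m + 1) + 2 := by ring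
  have hd2 : (m + 1) ∣ (2 * m + 1) * ((2 * m + 1) * m + 1) + 2 := heq2 ▸ dvd_mul_right _ _
  have hd : (m + 1) ∣ 2 := by
    have := Nat.dvd_sub hd2 hd1
    rwa [Nat.add_sub_cancel_left] at this
  have := Nat.le_of_dvd (by omega) hd
  omega

lemma even_case (m S0 : ℕ) (hm : 1 ≤ m)
    (h : m * (m + 1) * S0 = (2 * m * m) * (2 * m * m + 1)) : m = 1 ∨ m = 2 ∨ m = 5 := by
  have h2 : (m + 1) * S0 = 2 * m * (2 * m * m + 1) := by
    apply Nat.eq_of_mul_eq_mul_left (show 0 < m by omega)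
    calc m * ((m + 1) * S0) = m * (m + 1) * S0 := by ring
    _ = (2 * m * m) * (2 * m * m + 1) := h
    _ = m * (2 * m * (2 * m * m + 1)) := by ring
  have hd1 : (m + 1) ∣ 2 * m * (2 * m * m + 1) := ⟨S0, h2.symm⟩
  obtain ⟨c, rfl⟩ : ∃ c, m = c + 1 := ⟨m - 1, by omega⟩
  have heq2 : (c + 2) * (4 * c * c + 4 * c + 6)
      = 2 * (c + 1) * (2 * (c + 1) * (c + 1) + 1) + 6 := by ring
  have hd2 : (c + 1 + 1) ∣ 2 * (c + 1) * (2 * (c + 1) * (c + 1) + 1) + 6 := by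
    have : (c + 2) ∣ (c + 2) * (4 * c * c + 4 * c + 6) := dvd_mul_right _ _
    rwa [heq2] at this
  have hd : (c + 2) ∣ 6 := by
    have := Nat.dvd_sub hd2 hd1
    rwa [Nat.add_sub_cancel_left] at this
  have hc4 : c ≤ 4 := by
    have := Nat.le_of_dvd (by omega) hd
    omega
  interval_cases c <;> revert hd <;> decide


end Aux

/-- If the cycle on `n ≥ 3` vertices admits a geodesic Leech labeling, then
`n = 3`, `n = 4`, or `n = 10`. -/
theorem statement_6 (n : ℕ) (hn : 3 ≤ n)
    (h : ∃ f : Sym2 (Fin n) → ℕ, (SimpleGraph.cycleGraph n).IsGeodesicLeechLabeling f) :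
    n = 3 ∨ n = 4 ∨ n = 10 := by
  obtain ⟨k, rfl⟩ : ∃ k, n = k + 3 := ⟨n - 3, by omega⟩
  obtain ⟨f, hpos, hbij⟩ := h
  have hg : SimpleGraph.cycleGraph (k + 3) = cg k := rfl
  rw [hg, geo_eq, tgp_eq] at hbij
  set m := (k + 3) / 2 with hm_def
  set T := (k + 3) * m with hT_def
  have hm1 : 1 ≤ m := by omega
  have hsum : ∑ S ∈ arcFam k, ∑ e ∈ S, f e = ∑ j ∈ Finset.Icc 1 T, j := by
    apply Finset.sum_bij (i := fun S _ => ∑ e ∈ S, f e)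
    · intro S hS
      rw [Finset.mem_Icc]
      have := hbij.mapsTo (Finset.mem_coe.mpr hS)
      rwa [Set.mem_Icc] at this
    · intro S hS S' hS' hSS'
      exact hbij.injOn (Finset.mem_coe.mpr hS) (Finset.mem_coe.mpr hS') hSS'
    · intro j hj
      rw [Finset.mem_Icc] at hj
      obtain ⟨S, hS, hwS⟩ := hbij.surjOn (Set.mem_Icc.mpr hj)
      exact ⟨S, Finset.mem_coe.mp hS, by simpa using hwS⟩
    · intro S hS
      rfl
  rw [sum_weights f] at hsum
  set S0 := ∑ a : Fin (k + 3), f s(a, a + 1) with hS0_def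
  have h2 : m * (m + 1) * S0 = T * (T + 1) := by
    calc m * (m + 1) * S0 = (2 * ∑ ℓ ∈ Finset.Icc 1 m, ℓ) * S0 := by rw [gauss]
    _ = 2 * ((∑ ℓ ∈ Finset.Icc 1 m, ℓ) * S0) := by ring
    _ = 2 * ∑ j ∈ Finset.Icc 1 T, j := by rw [hsum]
    _ = T * (T + 1) := gauss T
  rcases Nat.even_or_odd (k + 3) with he | ho
  · -- even: k + 3 = 2 * m
    have hn2 : k + 3 = 2 * m := by
      obtain ⟨c, hc⟩ := he
      omega
    rw [hT_def, hn2] at h2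
    rcases even_case m S0 hm1 h2 with h1 | h1 | h1 <;> omega
  · -- odd: k + 3 = 2 * m + 1
    have hn2 : k + 3 = 2 * m + 1 := by
      obtain ⟨c, hc⟩ := ho
      omega
    rw [hT_def, hn2] at h2
    have := odd_case m S0 hm1 h2
    omega
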